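/- Let C be a triangulated category and (X, Y) a balanced pair with associated proper class ξ := ξ_X = ξ^Y. If the extriangulated category (C, E_ξ, s_ξ) induced by restricting the triangulated structure to ξ is a triangulated category (i.e. ξ contains all distinguished triangles), then X = 0 and Y = 0. -/

import Mathlib

open CategoryTheory CategoryTheory.Limits CategoryTheory.Pretriangulated

variable {C : Type*} [Category C] [Preadditive C] [HasZeroObject C] [HasShift C ℤ]
  [∀ n : ℤ, (shiftFunctor C n).Additive] [Pretriangulated C] [HasBinaryBiproducts C]

/-- The class of `Hom(X,-)`-exact distinguished triangles. -/
def xiX (X : Set C) : Set (Triangle C) :=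
  {T | T ∈ (distTriang C) ∧
    ∀ X' ∈ X, Function.Surjective (fun u : X' ⟶ T.obj₂ => u ≫ T.mor₂)}

/-- The class of `Hom(-,Y)`-exact distinguished triangles. -/
def xiY (Y : Set C) : Set (Triangle C) :=
  {T | T ∈ (distTriang C) ∧
    ∀ Y' ∈ Y, Function.Surjective (fun u : T.obj₂ ⟶ Y' => T.mor₁ ≫ u)}

/-- An object `P` is `ξ`-projective if `Hom(P, -)` sends every triangle in `ξ` to a
short exact sequence of abelian groups. -/
def IsXiProjective (ξ : Set (Triangle C)) (P : C) : Prop :=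
  ∀ T ∈ ξ,
    Function.Injective (fun u : P ⟶ T.obj₁ => u ≫ T.mor₁) ∧
    (∀ v : P ⟶ T.obj₁, (v ≫ T.mor₁) ≫ T.mor₂ = 0) ∧
    (∀ u : P ⟶ T.obj₂, u ≫ T.mor₂ = 0 → ∃ v : P ⟶ T.obj₁, v ≫ T.mor₁ = u) ∧
    Function.Surjective (fun u : P ⟶ T.obj₂ => u ≫ T.mor₂)

/-- An object `I` is `ξ`-injective if `Hom(-, I)` sends every triangle in `ξ` to a
short exact sequence of abelian groups. -/
def IsXiInjective (ξ : Set (Triangle C)) (I : C) : Prop :=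
  ∀ T ∈ ξ,
    Function.Injective (fun u : T.obj₃ ⟶ I => T.mor₂ ≫ u) ∧
    (∀ v : T.obj₃ ⟶ I, T.mor₁ ≫ T.mor₂ ≫ v = 0) ∧
    (∀ u : T.obj₂ ⟶ I, T.mor₁ ≫ u = 0 → ∃ v : T.obj₃ ⟶ I, T.mor₂ ≫ v = u) ∧
    Function.Surjective (fun u : T.obj₂ ⟶ I => T.mor₁ ≫ u)

theorem stmt_14 (X Y : Set C)
    (hXzero : ∀ Z : C, IsZero Z → Z ∈ X) (hXadd : ∀ A B : C, A ∈ X → B ∈ X → (A ⊞ B) ∈ X)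
    (hXshift : ∀ A : C, A ∈ X ↔ (A⟦(1 : ℤ)⟧) ∈ X)
    (hXsummand : ∀ (P Q : C), Q ∈ X → ∀ (s : P ⟶ Q) (r : Q ⟶ P), s ≫ r = 𝟙 P → P ∈ X)
    (hYzero : ∀ Z : C, IsZero Z → Z ∈ Y) (hYadd : ∀ A B : C, A ∈ Y → B ∈ Y → (A ⊞ B) ∈ Y)
    (hYshift : ∀ A : C, A ∈ Y ↔ (A⟦(1 : ℤ)⟧) ∈ Y)
    (hYsummand : ∀ (P Q : C), Q ∈ Y → ∀ (s : P ⟶ Q) (r : Q ⟶ P), s ≫ r = 𝟙 P → P ∈ Y)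
    (hbal : xiX X = xiY Y)
    (hXP : ∀ P : C, P ∈ X ↔ IsXiProjective (xiX X) P)
    (hYI : ∀ I : C, I ∈ Y ↔ IsXiInjective (xiY Y) I)
    (henoughP : ∀ A : C, ∃ (K P : C) (f : K ⟶ P) (g : P ⟶ A) (h : A ⟶ K⟦(1 : ℤ)⟧),
      Triangle.mk f g h ∈ xiX X ∧ IsXiProjective (xiX X) P)
    (henoughI : ∀ A : C, ∃ (I K : C) (f : A ⟶ I) (g : I ⟶ K) (h : K ⟶ A⟦(1 : ℤ)⟧),
      Triangle.mk f g h ∈ xiX X ∧ IsXiInjective (xiX X) I)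
    (hall : ∀ T : Triangle C, T ∈ (distTriang C) → T ∈ xiX X) :
    (∀ A ∈ X, IsZero A) ∧ (∀ A ∈ Y, IsZero A) := by
  constructor
  · intro A hA
    have hP := (hXP A).mp hA
    have hT : (contractibleTriangle A).rotate ∈ xiX X :=
      hall _ (rot_of_distTriang _ (contractible_distinguished A))
    have h := (hP _ hT).1
    rw [IsZero.iff_id_eq_zero]
    apply h
    simp [contractibleTriangle]
    exact (isZero_zero C).eq_of_tgt _ _
  · intro I hI
    have hInj := (hYI I).mp hI
    have hT : (contractibleTriangle I).rotate ∈ xiY Y := by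
      rw [← hbal]
      exact hall _ (rot_of_distTriang _ (contractible_distinguished I))
    obtain ⟨u, hu⟩ := (hInj _ hT).2.2.2 (𝟙 I)
    rw [IsZero.iff_id_eq_zero, ← hu]
    simp [contractibleTriangle]
    exact zero_comp
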